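/- If A is an unambiguous automaton, then for any productive pair (q,a) and any tree t with t(ε) = a, there is at most one transition δ starting from (q,a) such that t ∈ L_δ. -/
import Mathlib


open Filter Set

/-- An infinite binary tree over alphabet `A`. -/
abbrev Tree' (A : Type) := List Bool → A

/-- Subtree of `t` rooted at vertex `v`. -/
def subtreeAt {A : Type} (t : Tree' A) (v : List Bool) : Tree' A := fun w => t (v ++ w)

/-- Substitution `t[r/v]`: replace the subtree of `t` at `v` by `r`. -/
def substAt {A : Type} (t r : Tree' A) (v : List Bool) : Tree' A :=
  fun w => if v <+: w then r (w.drop v.length) else t w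

/-- A nondeterministic parity tree automaton. -/
structure NPA (Q A : Type) where
  q0 : Q
  Δ : Set (Q × Q × A × Q)
  Ω : Q → ℕ

/-- `ρ` is a run of `M` on `t`. `false` = left, `true` = right. -/
def NPA.IsRun {Q A : Type} (M : NPA Q A) (t : Tree' A) (ρ : Tree' Q) : Prop :=
  ∀ v : List Bool, (ρ v, ρ (v ++ [false]), t v, ρ (v ++ [true])) ∈ M.Δ

/-- Length-`n` prefix of an infinite branch, as a vertex. -/
def pref (b : ℕ → Bool) (n : ℕ) : List Bool := (List.range n).map b

/-- `ρ` is an accepting run of `M` on `t`. -/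
def NPA.Accepting {Q A : Type} (M : NPA Q A) (t : Tree' A) (ρ : Tree' Q) : Prop :=
  M.IsRun t ρ ∧
    ∀ b : ℕ → Bool, Even (Filter.limsup (fun n => M.Ω (ρ (pref b n))) Filter.atTop)

/-- Accepting run starting from state `q`. -/
def NPA.AcceptingFrom {Q A : Type} (M : NPA Q A) (q : Q) (t : Tree' A) (ρ : Tree' Q) : Prop :=
  M.Accepting t ρ ∧ ρ [] = q

/-- The language recognised by `M`. -/
def NPA.Lang {Q A : Type} (M : NPA Q A) : Set (Tree' A) :=
  { t | ∃ ρ, M.AcceptingFrom M.q0 t ρ }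

/-- `M` is unambiguous. -/
def NPA.Unambiguous {Q A : Type} (M : NPA Q A) : Prop :=
  ∀ (t : Tree' A) (ρ₁ ρ₂ : Tree' Q),
    M.AcceptingFrom M.q0 t ρ₁ → M.AcceptingFrom M.q0 t ρ₂ → ρ₁ = ρ₂

/-- `(q, a)` is productive. -/
def NPA.Productive {Q A : Type} (M : NPA Q A) (q : Q) (a : A) : Prop :=
  ∃ (t : Tree' A) (ρ : Tree' Q) (v : List Bool),
    M.AcceptingFrom M.q0 t ρ ∧ ρ v = q ∧ t v = a

/-- The transition `δ` starts from the pair `(q, a)`. -/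
def NPA.StartsFrom {Q A : Type} (M : NPA Q A) (δ : Q × Q × A × Q) (q : Q) (a : A) : Prop :=
  δ ∈ M.Δ ∧ δ.1 = q ∧ δ.2.2.1 = a

/-- `L_δ`: trees with an accepting run using transition `δ` at the root. -/
def NPA.Ldelta {Q A : Type} (M : NPA Q A) (δ : Q × Q × A × Q) : Set (Tree' A) :=
  { t | ∃ ρ : Tree' Q, M.Accepting t ρ ∧
      ρ [] = δ.1 ∧ ρ [false] = δ.2.1 ∧ t [] = δ.2.2.1 ∧ ρ [true] = δ.2.2.2 }

-- aux lemmas for stmt7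
lemma pref_succ (b : ℕ → Bool) (n : ℕ) : pref b (n+1) = pref b n ++ [b n] := by
  simp [pref, List.range_succ]

lemma pref_length (b : ℕ → Bool) (n : ℕ) : (pref b n).length = n := by simp [pref]

lemma pref_add (b : ℕ → Bool) (l n : ℕ) :
    pref b (l + n) = pref b l ++ pref (fun i => b (l + i)) n := by
  induction n with
  | zero => simp [pref]
  | succ n ih => rw [← Nat.add_assoc, pref_succ, ih, pref_succ]; simp

lemma prefix_snoc {v w : List Bool} {c : Bool} :
    v <+: w ++ [c] ↔ v <+: w ∨ v = w ++ [c] := by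
  constructor
  · intro h
    rcases Nat.lt_or_ge v.length (w ++ [c]).length with hl | hl
    · left
      exact List.prefix_of_prefix_length_le h (List.prefix_append w [c]) (by
        simpa using Nat.lt_succ_iff.mp (by simpa using hl))
    · right
      exact h.eq_of_length (le_antisymm h.length_le hl)
  · rintro (h | rfl)
    · exact h.trans (List.prefix_append w [c])
    · exact List.prefix_rfl

lemma limsup_shift (u : ℕ → ℕ) (k : ℕ) :
    Filter.limsup (fun n => u (n + k)) Filter.atTop = Filter.limsup u Filter.atTop := by
  show (Filter.map (fun n => u (n + k)) Filter.atTop).limsSup = _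
  rw [show (fun n => u (n + k)) = u ∘ (fun n => n + k) from rfl, ← Filter.map_map,
    Filter.map_add_atTop_eq_nat]
  rfl

lemma graft_accepting {Q A : Type} (M : NPA Q A) {t₀ t : Tree' A} {ρ₀ ρ : Tree' Q}
    {v : List Bool} (h₀ : M.Accepting t₀ ρ₀) (h : M.Accepting t ρ) (hv : ρ [] = ρ₀ v) :
    M.Accepting (substAt t₀ t v) (substAt ρ₀ ρ v) := by
  have child : ∀ (w : List Bool) (c : Bool),
      substAt ρ₀ ρ v (w ++ [c]) =
        if v <+: w then ρ (w.drop v.length ++ [c]) else ρ₀ (w ++ [c]) := by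
    intro w c
    by_cases hw : v <+: w
    · have hpc : v <+: w ++ [c] := hw.trans (List.prefix_append w [c])
      simp only [substAt, if_pos hpc, if_pos hw, List.drop_append_of_le_length hw.length_le]
    · simp only [substAt, if_neg hw]
      by_cases he : v = w ++ [c]
      · subst he
        simp [List.prefix_rfl, hv]
      · rw [if_neg (by rw [prefix_snoc]; tauto)]
  constructor
  · intro w
    by_cases hw : v <+: w
    · have h1 := child w false; have h2 := child w true
      rw [if_pos hw] at h1 h2
      rw [show substAt ρ₀ ρ v w = ρ (w.drop v.length) from if_pos hw,
        show substAt t₀ t v w = t (w.drop v.length) from if_pos hw, h1, h2]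
      exact h.1 (w.drop v.length)
    · have h1 := child w false; have h2 := child w true
      rw [if_neg hw] at h1 h2
      rw [show substAt ρ₀ ρ v w = ρ₀ w from if_neg hw,
        show substAt t₀ t v w = t₀ w from if_neg hw, h1, h2]
      exact h₀.1 w
  · intro b
    by_cases hb : pref b v.length = v
    · set l := v.length with hl
      set b' : ℕ → Bool := fun i => b (l + i) with hb'
      have key : ∀ n, substAt ρ₀ ρ v (pref b (n + l)) = ρ (pref b' n) := by
        intro n
        have hp : pref b (n + l) = v ++ pref b' n := by
          rw [Nat.add_comm, pref_add, hb]
        rw [hp]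
        simp [substAt, List.prefix_append]
      have hls : Filter.limsup (fun n => M.Ω (substAt ρ₀ ρ v (pref b n))) Filter.atTop
          = Filter.limsup (fun n => M.Ω (ρ (pref b' n))) Filter.atTop := by
        rw [← limsup_shift (fun n => M.Ω (substAt ρ₀ ρ v (pref b n))) l]
        congr 1
        funext n
        exact congrArg M.Ω (key n)
      rw [hls]
      exact h.2 b'
    · have key : ∀ n, substAt ρ₀ ρ v (pref b n) = ρ₀ (pref b n) := by
        intro n
        have hnp : ¬ v <+: pref b n := by
          intro hp
          have hln : v.length ≤ n := by simpa [pref_length] using hp.length_le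
          have hpp : pref b v.length <+: pref b n := by
            have he : pref b n = pref b v.length ++ pref (fun i => b (v.length + i)) (n - v.length) := by
              rw [← pref_add, Nat.add_sub_cancel' hln]
            rw [he]; exact List.prefix_append _ _
          exact hb ((List.prefix_of_prefix_length_le hp hpp (by simp [pref_length])).eq_of_length
            (by simp [pref_length])).symm
        simp [substAt, hnp]
      have hls : (fun n => M.Ω (substAt ρ₀ ρ v (pref b n))) = fun n => M.Ω (ρ₀ (pref b n)) :=
        funext fun n => congrArg M.Ω (key n)
      rw [hls]
      exact h₀.2 b

lemma substAt_of_prefix {Q : Type} (ρ₀ ρ : Tree' Q) (v w : List Bool) :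
    substAt ρ₀ ρ v (v ++ w) = ρ w := by
  simp [substAt, List.prefix_append]

theorem stmt7 {Q A : Type} (M : NPA Q A) (hU : M.Unambiguous) (q : Q) (a : A)
    (hprod : M.Productive q a) (t : Tree' A) (ht : t [] = a) :
    ∀ δ₁ δ₂ : Q × Q × A × Q, M.StartsFrom δ₁ q a → M.StartsFrom δ₂ q a →
      t ∈ M.Ldelta δ₁ → t ∈ M.Ldelta δ₂ → δ₁ = δ₂ := by
  obtain ⟨t₀, ρ₀, v, ⟨hacc₀, hroot₀⟩, hqv, hav⟩ := hprod
  intro δ₁ δ₂ hs₁ hs₂ ht₁ ht₂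
  obtain ⟨ρ₁, hρ₁, e11, e12, e13, e14⟩ := ht₁
  obtain ⟨ρ₂, hρ₂, e21, e22, e23, e24⟩ := ht₂
  have hv₁ : ρ₁ [] = ρ₀ v := by rw [e11, hs₁.2.1, ← hqv]
  have hv₂ : ρ₂ [] = ρ₀ v := by rw [e21, hs₂.2.1, ← hqv]
  have g₁ := graft_accepting M hacc₀ hρ₁ hv₁
  have g₂ := graft_accepting M hacc₀ hρ₂ hv₂
  have root : ∀ (ρ : Tree' Q), ρ [] = ρ₀ v → substAt ρ₀ ρ v [] = M.q0 := by
    intro ρ hρv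
    by_cases hv0 : v = []
    · subst hv0
      simpa [substAt] using hρv.trans hroot₀
    · have : ¬ v <+: ([] : List Bool) := by simp [List.prefix_nil, hv0]
      simp [substAt, this, hroot₀]
  have heq := hU (substAt t₀ t v) (substAt ρ₀ ρ₁ v) (substAt ρ₀ ρ₂ v)
    ⟨g₁, root ρ₁ hv₁⟩ ⟨g₂, root ρ₂ hv₂⟩
  have hF : ρ₁ [false] = ρ₂ [false] := by
    have := congrFun heq (v ++ [false])
    rwa [substAt_of_prefix, substAt_of_prefix] at this
  have hT : ρ₁ [true] = ρ₂ [true] := by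
    have := congrFun heq (v ++ [true])
    rwa [substAt_of_prefix, substAt_of_prefix] at this
  obtain ⟨x₁, y₁, z₁, w₁⟩ := δ₁
  obtain ⟨x₂, y₂, z₂, w₂⟩ := δ₂
  simp only at e11 e12 e13 e14 e21 e22 e23 e24
  have hx : x₁ = x₂ := hs₁.2.1.trans hs₂.2.1.symm
  have hy : y₁ = y₂ := by rw [← e12, ← e22, hF]
  have hz : z₁ = z₂ := by rw [← e13, ← e23]
  have hw : w₁ = w₂ := by rw [← e14, ← e24, hT]
  simp [hx, hy, hz, hw]
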